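/- For n ≥ 2, the function H has no neutral element: there is no e ∈ [0,1] such that for every t ∈ [0,1] and every index i, H applied to the vector whose i-th coordinate is t and whose other coordinates are all e equals t. -/

import Mathlib

/-- The median of a vector `x : Fin n → ℝ`, computed from a non-decreasing
rearrangement of `x`. -/
noncomputable def med {n : ℕ} (x : Fin n → ℝ) : ℝ :=
  if hn : 0 < n then
    if n % 2 = 1 then (x ∘ Tuple.sort x) ⟨n / 2, by omega⟩
    else ((x ∘ Tuple.sort x) ⟨n / 2 - 1, by omega⟩ +
            (x ∘ Tuple.sort x) ⟨n / 2, by omega⟩) / 2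
  else 0

open Classical in
/-- The median-based weight functions. -/
noncomputable def hw {n : ℕ} (i : Fin n) (x : Fin n → ℝ) : ℝ :=
  if ∃ c : ℝ, ∀ j, x j = c then 1 / (n : ℝ)
  else (1 / ((n : ℝ) - 1)) * (1 - |x i - med x| / ∑ j, |x j - med x|)

/-- The DYOWA function `H` associated to the median-based weight functions. -/
noncomputable def Hmed {n : ℕ} (x : Fin n → ℝ) : ℝ :=
  ∑ i, hw i x * x i

lemma med_eq_of_monotone {n : ℕ} (hn : 0 < n) (x : Fin n → ℝ) (σ : Equiv.Perm (Fin n))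
    (h : Monotone (x ∘ σ)) :
    med x = if n % 2 = 1 then (x ∘ σ) ⟨n / 2, by omega⟩
      else ((x ∘ σ) ⟨n / 2 - 1, by omega⟩ + (x ∘ σ) ⟨n / 2, by omega⟩) / 2 := by
  have hs : x ∘ σ = x ∘ Tuple.sort x := Tuple.comp_sort_eq_comp_iff_monotone.mpr h
  rw [med, dif_pos hn, ← hs]

lemma med_update_le {n : ℕ} (hn : 2 ≤ n) (i : Fin n) (t e : ℝ) (hte : t ≤ e) :
    med (Function.update (fun _ : Fin n => e) i t) =
      if n = 2 then (t + e) / 2 else e := by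
  have hn0 : 0 < n := by omega
  set x := Function.update (fun _ : Fin n => e) i t with hx
  set σ : Equiv.Perm (Fin n) := Equiv.swap i ⟨0, hn0⟩ with hσ
  have hxσ : x ∘ σ = fun j : Fin n => if (j : ℕ) = 0 then t else e := by
    funext j
    by_cases hj0 : j = (⟨0, hn0⟩ : Fin n)
    · subst hj0
      show x (Equiv.swap i ⟨0, hn0⟩ ⟨0, hn0⟩) = _
      rw [Equiv.swap_apply_right, hx, Function.update_self]
      simp
    · have hj0' : (j : ℕ) ≠ 0 := fun h => hj0 (Fin.ext h)
      by_cases hji : j = i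
      · subst hji
        show x (Equiv.swap j ⟨0, hn0⟩ j) = _
        rw [Equiv.swap_apply_left, hx, Function.update_of_ne (fun h => hj0 h.symm)]
        simp [hj0']
      · show x (Equiv.swap i ⟨0, hn0⟩ j) = _
        rw [Equiv.swap_apply_of_ne_of_ne hji hj0, hx, Function.update_of_ne hji]
        simp [hj0']
  have hmono : Monotone (x ∘ σ) := by
    rw [hxσ]
    intro a b hab
    by_cases ha : (a : ℕ) = 0
    · by_cases hb : (b : ℕ) = 0 <;> simp [ha, hb, hte]
    · have hb : (b : ℕ) ≠ 0 := by
        intro hb; exact ha (Nat.le_antisymm (hb ▸ hab) (Nat.zero_le _))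
      simp [ha, hb]
  rw [med_eq_of_monotone hn0 x σ hmono, hxσ]
  by_cases h2 : n = 2
  · subst h2; norm_num
  · have h3 : 3 ≤ n := by omega
    have hhalf : n / 2 ≠ 0 := by omega
    by_cases hpar : n % 2 = 1
    · simp [hpar, hhalf, h2]
    · have hm1 : n / 2 - 1 ≠ 0 := by omega
      simp [hpar, hhalf, hm1, h2]

lemma med_update_ge {n : ℕ} (hn : 2 ≤ n) (i : Fin n) (t e : ℝ) (het : e ≤ t) :
    med (Function.update (fun _ : Fin n => e) i t) =
      if n = 2 then (t + e) / 2 else e := by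
  have hn0 : 0 < n := by omega
  set x := Function.update (fun _ : Fin n => e) i t with hx
  have hl : n - 1 < n := by omega
  set σ : Equiv.Perm (Fin n) := Equiv.swap i ⟨n - 1, hl⟩ with hσ
  have hxσ : x ∘ σ = fun j : Fin n => if (j : ℕ) = n - 1 then t else e := by
    funext j
    by_cases hj0 : j = (⟨n - 1, hl⟩ : Fin n)
    · subst hj0
      show x (Equiv.swap i ⟨n - 1, hl⟩ ⟨n - 1, hl⟩) = _
      rw [Equiv.swap_apply_right, hx, Function.update_self]
      simp
    · have hj0' : (j : ℕ) ≠ n - 1 := fun h => hj0 (Fin.ext h)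
      by_cases hji : j = i
      · subst hji
        show x (Equiv.swap j ⟨n - 1, hl⟩ j) = _
        rw [Equiv.swap_apply_left, hx, Function.update_of_ne (fun h => hj0 h.symm)]
        simp [hj0']
      · show x (Equiv.swap i ⟨n - 1, hl⟩ j) = _
        rw [Equiv.swap_apply_of_ne_of_ne hji hj0, hx, Function.update_of_ne hji]
        simp [hj0']
  have hmono : Monotone (x ∘ σ) := by
    rw [hxσ]
    intro a b hab
    by_cases hb : (b : ℕ) = n - 1
    · by_cases ha : (a : ℕ) = n - 1 <;> simp [ha, hb, het]
    · have ha : (a : ℕ) ≠ n - 1 := by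
        intro ha
        have : (b : ℕ) < n := b.isLt
        omega
      simp [ha, hb]
  rw [med_eq_of_monotone hn0 x σ hmono, hxσ]
  by_cases h2 : n = 2
  · subst h2; norm_num; ring
  · have h3 : 3 ≤ n := by omega
    have hhalf : n / 2 ≠ n - 1 := by omega
    by_cases hpar : n % 2 = 1
    · simp [hpar, hhalf, h2]
    · have hm1 : n / 2 - 1 ≠ n - 1 := by omega
      simp [hpar, hhalf, hm1, h2]

lemma update_not_const {n : ℕ} (hn : 2 ≤ n) (i : Fin n) (t e : ℝ) (hte : t ≠ e) :
    ¬ ∃ c : ℝ, ∀ j, Function.update (fun _ : Fin n => e) i t j = c := by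
  rintro ⟨c, hc⟩
  obtain ⟨j, hj⟩ : ∃ j : Fin n, j ≠ i := by
    haveI : Nontrivial (Fin n) := Fin.nontrivial_iff_two_le.mpr hn
    exact exists_ne i
  have h1 := hc i
  have h2 := hc j
  rw [Function.update_self] at h1
  rw [Function.update_of_ne hj] at h2
  exact hte (h1.trans h2.symm)

lemma Hmed_update_big {n : ℕ} (hn : 3 ≤ n) (i : Fin n) (t e : ℝ) (hte : t ≠ e)
    (hm : med (Function.update (fun _ : Fin n => e) i t) = e) :
    Hmed (Function.update (fun _ : Fin n => e) i t) = e := by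
  set x := Function.update (fun _ : Fin n => e) i t with hx
  have hnc := update_not_const (by omega) i t e hte
  have hsum : ∑ j, |x j - med x| = |t - e| := by
    rw [hm]
    rw [Finset.sum_eq_single_of_mem i (Finset.mem_univ i)]
    · rw [hx, Function.update_self]
    · intro j _ hj
      rw [hx, Function.update_of_ne hj]
      simp
  have habs : |t - e| ≠ 0 := by
    simp [sub_eq_zero, hte]
  have hterm : ∀ j : Fin n, hw j x * x j =
      e / ((n : ℝ) - 1) - (if j = i then e / ((n : ℝ) - 1) else 0) := by
    intro j
    rw [hw, if_neg hnc, hsum, hm]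
    by_cases hj : j = i
    · subst hj
      rw [hx, Function.update_self]
      simp [div_self habs]
    · rw [hx, Function.update_of_ne hj]
      simp [hj]
      ring
  rw [Hmed]
  simp only [hterm]
  rw [Finset.sum_sub_distrib, Finset.sum_const, Finset.sum_ite_eq' Finset.univ i
    (fun _ => e / ((n : ℝ) - 1)), if_pos (Finset.mem_univ i)]
  simp only [Finset.card_univ, Fintype.card_fin, nsmul_eq_mul]
  have hn1 : ((n : ℝ) - 1) ≠ 0 := by
    have : (3 : ℝ) ≤ (n : ℝ) := by exact_mod_cast hn
    linarith
  field_simp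

lemma Hmed_update_two (i : Fin 2) (t e : ℝ) (hte : t ≠ e)
    (hm : med (Function.update (fun _ : Fin 2 => e) i t) = (t + e) / 2) :
    Hmed (Function.update (fun _ : Fin 2 => e) i t) = (t + e) / 2 := by
  set x := Function.update (fun _ : Fin 2 => e) i t with hx
  have hnc := update_not_const (by norm_num) i t e hte
  have habs : |t - e| ≠ 0 := by simp [sub_eq_zero, hte]
  have h1 : |t - (t + e) / 2| = |t - e| / 2 := by
    rw [show t - (t + e) / 2 = (t - e) / 2 by ring, abs_div]
    norm_num
  have h2 : |e - (t + e) / 2| = |t - e| / 2 := by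
    rw [show e - (t + e) / 2 = -((t - e) / 2) by ring, abs_neg, abs_div]
    norm_num
  have hsum : ∑ j, |x j - med x| = |t - e| := by
    rw [hm, Fin.sum_univ_two]
    fin_cases i <;>
      simp [hx, Function.update, h1, h2]
  have hhw : ∀ j : Fin 2, hw j x = 1 / 2 := by
    intro j
    rw [hw, if_neg hnc, hsum, hm]
    have hxj : x j = t ∨ x j = e := by
      by_cases hj : j = i
      · left; rw [hx, hj, Function.update_self]
      · right; rw [hx, Function.update_of_ne hj]
    rcases hxj with h | h <;> rw [h]
    · rw [h1]
      norm_num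
      rw [div_right_comm, div_self habs]
      norm_num
    · rw [h2]
      norm_num
      rw [div_right_comm, div_self habs]
      norm_num
  rw [Hmed, Fin.sum_univ_two, hhw 0, hhw 1]
  fin_cases i <;> simp [hx, Function.update] <;> ring

/-- The function `H` has no neutral element. -/
theorem Hmed_no_neutral_element {n : ℕ} (hn : 2 ≤ n) :
    ¬ ∃ e ∈ Set.Icc (0 : ℝ) 1, ∀ t ∈ Set.Icc (0 : ℝ) 1, ∀ i : Fin n,
      Hmed (Function.update (fun _ : Fin n => e) i t) = t := by
  rintro ⟨e, ⟨he0, he1⟩, hne⟩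
  have hi : (0 : ℕ) < n := by omega
  set i : Fin n := ⟨0, hi⟩
  -- choose t ∈ {0,1} with t ≠ e, together with the right inequality
  obtain ⟨t, ht0, ht1, hte, hmed⟩ :
      ∃ t : ℝ, 0 ≤ t ∧ t ≤ 1 ∧ t ≠ e ∧
        med (Function.update (fun _ : Fin n => e) i t) = if n = 2 then (t + e) / 2 else e := by
    by_cases h0 : e = 0
    · exact ⟨1, by norm_num, le_refl 1, by rw [h0]; norm_num,
        med_update_ge hn i 1 e (by rw [h0]; norm_num)⟩
    · exact ⟨0, le_refl 0, by norm_num, fun h => h0 h.symm,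
        med_update_le hn i 0 e he0⟩
  have hH := hne t ⟨ht0, ht1⟩ i
  by_cases h2 : n = 2
  · subst h2
    rw [if_pos rfl] at hmed
    rw [Hmed_update_two i t e hte hmed] at hH
    apply hte
    linarith
  · have h3 : 3 ≤ n := by omega
    rw [if_neg h2] at hmed
    rw [Hmed_update_big h3 i t e hte hmed] at hH
    exact hte hH.symm
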